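/- For every integer m ≥ 0 and every t < 0, the function x ↦ U_m(t, x) has exactly m real zeros, i.e. the set {x ∈ ℝ : U_m(t, x) = 0} has exactly m elements. -/

import Mathlib

/-- The `m`-th heat polynomial
`U_m(t, x) = ∑_{k=0}^{⌊m/2⌋} (m! / (k! (m−2k)!)) x^{m−2k} t^k`. -/
noncomputable def heatPoly (m : ℕ) (t x : ℝ) : ℝ :=
  ∑ k ∈ Finset.range (m / 2 + 1),
    ((Nat.factorial m : ℝ) / (Nat.factorial k * Nat.factorial (m - 2 * k))) *
      x ^ (m - 2 * k) * t ^ k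

open Finset Polynomial Filter Set Topology


noncomputable def hpc (m k : ℕ) : ℝ :=
  if 2*k ≤ m then (Nat.factorial m : ℝ) / (Nat.factorial k * Nat.factorial (m - 2*k)) else 0

lemma hpc_zero (m : ℕ) : hpc m 0 = 1 := by
  simp [hpc, Nat.factorial_ne_zero, div_self, Nat.factorial]

lemma hpc_of_gt {m k : ℕ} (h : m < 2*k) : hpc m k = 0 := by
  simp [hpc, Nat.not_le.mpr h]

lemma hpc_pos {m k : ℕ} (h : 2*k ≤ m) : 0 < hpc m k := by
  rw [hpc, if_pos h]
  positivity

lemma heatPoly_sum (m : ℕ) (t x : ℝ) :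
    heatPoly m t x = ∑ k ∈ Finset.range (m+1), hpc m k * x ^ (m - 2*k) * t ^ k := by
  rw [heatPoly]
  have h1 : (∑ k ∈ Finset.range (m / 2 + 1),
      ((Nat.factorial m : ℝ) / (Nat.factorial k * Nat.factorial (m - 2 * k))) *
        x ^ (m - 2 * k) * t ^ k)
      = ∑ k ∈ Finset.range (m/2+1), hpc m k * x ^ (m - 2*k) * t ^ k := by
    refine Finset.sum_congr rfl fun k hk => ?_
    simp only [Finset.mem_range] at hk
    rw [hpc, if_pos (by omega)]
  rw [h1]
  refine Finset.sum_subset (by intro k hk; simp only [Finset.mem_range] at *; omega) ?_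
  intro k hk hk2
  simp only [Finset.mem_range] at hk hk2
  rw [hpc_of_gt (by omega)]
  ring

lemma hpc_deriv (m k : ℕ) : hpc (m+1) k * ((m+1-2*k : ℕ) : ℝ) = (m+1) * hpc m k := by
  rcases le_or_gt (2*k) m with h | h
  · rw [hpc, if_pos (by omega), hpc, if_pos h]
    obtain ⟨a, ha⟩ : ∃ a, m - 2*k = a := ⟨_, rfl⟩
    have hm : m = a + 2*k := by omega
    subst hm
    have h1 : a + 2*k + 1 - 2*k = a + 1 := by omega
    have h2 : a + 2*k - 2*k = a := by omega
    rw [h1, h2, Nat.factorial_succ (a+2*k), Nat.factorial_succ a]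
    have f1 : (Nat.factorial (a+2*k) : ℝ) ≠ 0 := Nat.cast_ne_zero.mpr (Nat.factorial_ne_zero _)
    have f2 : (Nat.factorial k : ℝ) ≠ 0 := Nat.cast_ne_zero.mpr (Nat.factorial_ne_zero _)
    have f3 : (Nat.factorial a : ℝ) ≠ 0 := Nat.cast_ne_zero.mpr (Nat.factorial_ne_zero _)
    push_cast
    field_simp
  · rcases Nat.lt_or_ge (m+1) (2*k) with h2 | h2
    · rw [hpc_of_gt h2, hpc_of_gt h]; ring
    · -- 2k = m+1
      have : m+1-2*k = 0 := by omega
      rw [this, hpc_of_gt h]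
      push_cast
      ring

lemma hpc_rec (m k : ℕ) : hpc (m+2) (k+1) = hpc (m+1) (k+1) + 2*(m+1) * hpc m k := by
  rcases Nat.lt_or_ge m (2*k) with h | h
  · rw [hpc_of_gt h, hpc_of_gt (by omega), hpc_of_gt (by omega)]; ring
  rcases Nat.eq_or_lt_of_le h with h2 | h2
  · -- 2k = m : middle term zero
    rw [hpc_of_gt (m := m+1) (k := k+1) (by omega), hpc, if_pos (by omega), hpc, if_pos h]
    have e1 : m + 2 - 2*(k+1) = 0 := by omega
    have e2 : m - 2*k = 0 := by omega
    rw [e1, e2, Nat.factorial_succ (k), Nat.factorial_succ (m+1), Nat.factorial_succ m]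
    have f2 : (Nat.factorial k : ℝ) ≠ 0 := Nat.cast_ne_zero.mpr (Nat.factorial_ne_zero _)
    have f3 : (Nat.factorial m : ℝ) ≠ 0 := Nat.cast_ne_zero.mpr (Nat.factorial_ne_zero _)
    have hk : (m:ℝ) = 2*k := by exact_mod_cast congrArg Nat.cast h2.symm
    push_cast
    field_simp
    rw [hk]
    ring
  · -- 2k < m : all three active
    rw [hpc, if_pos (by omega), hpc, if_pos (by omega), hpc, if_pos h]
    obtain ⟨b, hb⟩ : ∃ b, m - 2*k - 1 = b := ⟨_, rfl⟩
    have hm : m = b + 2*k + 1 := by omega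
    subst hm
    have e1 : b + 2*k + 1 + 2 - 2*(k+1) = b + 1 := by omega
    have e2 : b + 2*k + 1 + 1 - 2*(k+1) = b := by omega
    have e3 : b + 2*k + 1 - 2*k = b + 1 := by omega
    rw [e1, e2, e3, Nat.factorial_succ (b+2*k+1+1), Nat.factorial_succ (b+2*k+1),
      Nat.factorial_succ b, Nat.factorial_succ k]
    have f1 : (Nat.factorial (b+2*k+1) : ℝ) ≠ 0 := Nat.cast_ne_zero.mpr (Nat.factorial_ne_zero _)
    have f2 : (Nat.factorial k : ℝ) ≠ 0 := Nat.cast_ne_zero.mpr (Nat.factorial_ne_zero _)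
    have f3 : (Nat.factorial b : ℝ) ≠ 0 := Nat.cast_ne_zero.mpr (Nat.factorial_ne_zero _)
    push_cast
    field_simp
    ring

noncomputable def hpoly (m : ℕ) (t : ℝ) : Polynomial ℝ :=
  ∑ k ∈ Finset.range (m+1), Polynomial.C (hpc m k * t ^ k) * Polynomial.X ^ (m - 2*k)

lemma hpoly_eval (m : ℕ) (t x : ℝ) : (hpoly m t).eval x = heatPoly m t x := by
  rw [heatPoly_sum, hpoly, Polynomial.eval_finset_sum]
  refine Finset.sum_congr rfl fun k _ => ?_
  simp [mul_comm, mul_assoc, mul_left_comm]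

lemma hpoly_coeff_m (m : ℕ) (t : ℝ) : (hpoly m t).coeff m = 1 := by
  rw [hpoly, Polynomial.finset_sum_coeff]
  rw [Finset.sum_eq_single 0]
  · simp [hpc_zero, Polynomial.coeff_C_mul, Polynomial.coeff_X_pow]
  · intro k hk hk0
    simp only [Finset.mem_range] at hk
    rw [Polynomial.coeff_C_mul, Polynomial.coeff_X_pow, if_neg (by omega), mul_zero]
  · intro h
    simp at h

lemma hpoly_natDegree_le (m : ℕ) (t : ℝ) : (hpoly m t).natDegree ≤ m := by
  refine Polynomial.natDegree_sum_le_of_forall_le _ _ fun k _ => ?_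
  refine le_trans (Polynomial.natDegree_C_mul_le _ _) ?_
  rw [Polynomial.natDegree_X_pow]
  omega

lemma hpoly_ne_zero (m : ℕ) (t : ℝ) : hpoly m t ≠ 0 := fun h => by
  have := hpoly_coeff_m m t
  rw [h] at this
  simp at this

lemma hpoly_natDegree (m : ℕ) (t : ℝ) : (hpoly m t).natDegree = m := by
  refine le_antisymm (hpoly_natDegree_le m t) ?_
  refine Polynomial.le_natDegree_of_ne_zero ?_
  rw [hpoly_coeff_m]; exact one_ne_zero

lemma hpoly_monic (m : ℕ) (t : ℝ) : (hpoly m t).Monic := by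
  unfold Polynomial.Monic Polynomial.leadingCoeff
  rw [hpoly_natDegree, hpoly_coeff_m]

lemma heatPoly_continuous (m : ℕ) (t : ℝ) : Continuous (heatPoly m t) := by
  have : heatPoly m t = fun x => (hpoly m t).eval x := by
    funext x; rw [hpoly_eval]
  rw [this]
  exact Polynomial.continuous _

lemma heatPoly_zeros_finite (m : ℕ) (t : ℝ) : {x : ℝ | heatPoly m t x = 0}.Finite := by
  have : {x : ℝ | heatPoly m t x = 0} = {x | (hpoly m t).IsRoot x} := by
    ext x; simp [Polynomial.IsRoot, hpoly_eval]
  rw [this]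
  exact Polynomial.finite_setOf_isRoot (hpoly_ne_zero m t)

lemma heatPoly_zeros_ncard_le (m : ℕ) (t : ℝ) : {x : ℝ | heatPoly m t x = 0}.ncard ≤ m := by
  classical
  have hsub : {x : ℝ | heatPoly m t x = 0} ⊆ ((hpoly m t).roots.toFinset : Set ℝ) := by
    intro x hx
    simp only [Set.mem_setOf_eq] at hx
    have hroot : (hpoly m t).IsRoot x := by rwa [Polynomial.IsRoot, hpoly_eval]
    simp only [Finset.mem_coe, Multiset.mem_toFinset, Polynomial.mem_roots']
    exact ⟨hpoly_ne_zero m t, hroot⟩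
  calc {x : ℝ | heatPoly m t x = 0}.ncard ≤ ((hpoly m t).roots.toFinset : Set ℝ).ncard :=
        Set.ncard_le_ncard hsub (Set.toFinite _)
    _ = (hpoly m t).roots.toFinset.card := Set.ncard_coe_finset _
    _ ≤ Multiset.card (hpoly m t).roots := Multiset.toFinset_card_le _
    _ ≤ (hpoly m t).natDegree := Polynomial.card_roots' _
    _ = m := hpoly_natDegree m t

lemma heatPoly_tendsto_atTop (m : ℕ) (t : ℝ) (hm : 0 < m) :
    Tendsto (heatPoly m t) atTop atTop := by
  have : heatPoly m t = fun x => (hpoly m t).eval x := by funext x; rw [hpoly_eval]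
  rw [this]
  refine Polynomial.tendsto_atTop_of_leadingCoeff_nonneg _ ?_ ?_
  · rw [Polynomial.degree_eq_natDegree (hpoly_ne_zero m t), hpoly_natDegree]
    exact_mod_cast hm
  · rw [hpoly_monic m t]; norm_num

lemma heatPoly_parity (m : ℕ) (t x : ℝ) :
    heatPoly m t (-x) = (-1)^m * heatPoly m t x := by
  rw [heatPoly_sum, heatPoly_sum, Finset.mul_sum]
  refine Finset.sum_congr rfl fun k hk => ?_
  rcases le_or_gt (2*k) m with h | h
  · have e : (-x) ^ (m - 2*k) = (-1)^m * x^(m-2*k) := by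
      rw [neg_pow]
      congr 1
      obtain ⟨a, ha⟩ : ∃ a, m - 2*k = a := ⟨_, rfl⟩
      have hma : m = a + 2*k := by omega
      rw [ha, hma, pow_add, pow_mul]
      norm_num
    rw [e]; ring
  · rw [hpc_of_gt h]; ring

lemma heatPoly_hasDerivAt (m : ℕ) (t x : ℝ) :
    HasDerivAt (heatPoly (m+1) t) ((m+1) * heatPoly m t x) x := by
  have h1 : HasDerivAt (heatPoly (m+1) t)
      (∑ k ∈ Finset.range (m+2), hpc (m+1) k * (((m+1-2*k : ℕ):ℝ) * x ^ (m+1-2*k-1)) * t^k) x := by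
    have hs := HasDerivAt.sum (u := Finset.range (m+2))
      (A := fun k y => hpc (m+1) k * y ^ (m+1-2*k) * t^k)
      (A' := fun k => hpc (m+1) k * (((m+1-2*k : ℕ):ℝ) * x ^ (m+1-2*k-1)) * t^k)
      (fun k _ => (((hasDerivAt_pow (m+1-2*k) x).const_mul (hpc (m+1) k)).mul_const (t^k)))
    have e : (fun y => ∑ k ∈ Finset.range (m+2), hpc (m+1) k * y ^ (m+1-2*k) * t^k)
        = heatPoly (m+1) t := by funext y; rw [heatPoly_sum]
    rw [← e]
    refine hs.congr_of_eventuallyEq (Filter.Eventually.of_forall fun y => ?_)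
    simp [Finset.sum_apply]
  convert h1 using 1
  have hterm : ∀ k, hpc (m+1) k * (((m+1-2*k:ℕ):ℝ) * x^(m+1-2*k-1)) * t^k
      = (m+1) * (hpc m k * x^(m-2*k) * t^k) := by
    intro k
    rcases le_or_gt (2*k) m with h | h
    · have e : m+1-2*k-1 = m - 2*k := by omega
      rw [e, show hpc (m+1) k * (((m+1-2*k:ℕ):ℝ) * x^(m-2*k)) * t^k
          = (hpc (m+1) k * ((m+1-2*k:ℕ):ℝ)) * (x^(m-2*k) * t^k) by ring, hpc_deriv]
      ring
    · rw [show m+1-2*k = 0 by omega, hpc_of_gt h]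
      simp
  rw [heatPoly_sum, Finset.mul_sum]
  rw [Finset.sum_congr rfl (fun k (_ : k ∈ Finset.range (m+2)) => hterm k)]
  conv_rhs => rw [show m+2 = (m+1)+1 from rfl, Finset.sum_range_succ]
  rw [hpc_of_gt (show m < 2*(m+1) by omega)]
  simp

lemma heatPoly_rec (m : ℕ) (t x : ℝ) :
    heatPoly (m+2) t x = x * heatPoly (m+1) t x + 2*(m+1)*t*heatPoly m t x := by
  rw [heatPoly_sum, heatPoly_sum, heatPoly_sum]
  rw [show m+2+1 = (m+2)+1 from rfl, Finset.sum_range_succ,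
    hpc_of_gt (show m+2 < 2*(m+2) by omega)]
  simp only [zero_mul, add_zero]
  rw [Finset.sum_range_succ', Finset.mul_sum, Finset.mul_sum,
    Finset.sum_range_succ' (fun k => x * (hpc (m+1) k * x ^ (m+1-2*k) * t^k)) (m+1)]
  have hterm : ∀ k, k ≤ m → hpc (m+2) (k+1) * x ^ (m+2-2*(k+1)) * t^(k+1)
      = x * (hpc (m+1) (k+1) * x ^ (m+1-2*(k+1)) * t^(k+1))
        + 2*(m+1)*t * (hpc m k * x^(m-2*k) * t^k) := by
    intro k hk
    rw [hpc_rec]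
    rcases le_or_gt (2*(k+1)) (m+1) with h | h
    · obtain ⟨a, ha⟩ : ∃ a, m+1-2*(k+1) = a := ⟨_, rfl⟩
      rw [ha, show m+2-2*(k+1) = a+1 by omega, show m - 2*k = a+1 by omega, pow_succ]
      ring
    · rw [hpc_of_gt (m := m+1) (k := k+1) h]
      rcases le_or_gt (2*k) m with h2 | h2
      · rw [show m+2-2*(k+1) = 0 by omega, show m-2*k = 0 by omega]
        ring
      · rw [hpc_of_gt h2]
        ring
  have h0 : hpc (m+2) 0 * x ^ (m+2-2*0) * t^0 = x * (hpc (m+1) 0 * x ^ (m+1-2*0) * t^0) := by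
    rw [hpc_zero, hpc_zero]
    norm_num
    ring
  rw [Finset.sum_congr rfl (fun k (hk : k ∈ Finset.range (m+1)) =>
    hterm k (by simpa using Nat.lt_succ_iff.mp (Finset.mem_range.mp hk)))]
  rw [Finset.sum_add_distrib, h0]
  ring


-- generic sign lemmas
lemma sign_prop {f : ℝ → ℝ} (hf : Continuous f) {s : Set ℝ} (hs : s.OrdConnected)
    (h0 : ∀ x ∈ s, f x ≠ 0) {x0 : ℝ} (hx0 : x0 ∈ s) (hp : 0 < f x0) :
    ∀ x ∈ s, 0 < f x := by
  intro x hx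
  by_contra hc
  push_neg at hc
  have hneg : f x < 0 := lt_of_le_of_ne hc (h0 x hx)
  have h01 : (0:ℝ) ∈ uIcc (f x) (f x0) := by
    rw [Set.mem_uIcc]
    left; exact ⟨hneg.le, hp.le⟩
  obtain ⟨y, hy, hfy⟩ := intermediate_value_uIcc (f := f) (a := x) (b := x0)
    hf.continuousOn h01
  exact h0 y (hs.uIcc_subset hx hx0 hy) hfy

lemma eventually_pos_right {f : ℝ → ℝ} {d r : ℝ} (h : HasDerivAt f d r) (h0 : f r = 0)
    (hd : 0 < d) : ∀ᶠ x in 𝓝[>] r, 0 < f x := by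
  have hs := hasDerivAt_iff_tendsto_slope.mp h
  have hev : ∀ᶠ x in 𝓝[≠] r, 0 < slope f r x :=
    hs.eventually (eventually_gt_nhds hd)
  have hle : 𝓝[>] r ≤ 𝓝[≠] r := nhdsWithin_mono r fun x hx => ne_of_gt hx
  filter_upwards [hle hev, self_mem_nhdsWithin] with x hx hxr
  have hxr' : (0:ℝ) < x - r := sub_pos.mpr hxr
  have : slope f r x = f x / (x - r) := by
    rw [slope_def_field, h0]
    field_simp
    ring
  rw [this] at hx
  exact (div_pos_iff.mp hx).resolve_right (fun h => absurd hxr' (by linarith [h.2])) |>.1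

lemma eventually_pos_left {f : ℝ → ℝ} {d r : ℝ} (h : HasDerivAt f d r) (h0 : f r = 0)
    (hd : d < 0) : ∀ᶠ x in 𝓝[<] r, 0 < f x := by
  have hs := hasDerivAt_iff_tendsto_slope.mp h
  have hev : ∀ᶠ x in 𝓝[≠] r, slope f r x < 0 :=
    hs.eventually (eventually_lt_nhds hd)
  have hle : 𝓝[<] r ≤ 𝓝[≠] r := nhdsWithin_mono r fun x hx => ne_of_lt hx
  filter_upwards [hle hev, self_mem_nhdsWithin] with x hx hxr
  have hxr' : x - r < 0 := sub_neg.mpr hxr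
  have : slope f r x = f x / (x - r) := by
    rw [slope_def_field, h0]
    field_simp
    ring
  rw [this] at hx
  rcases div_neg_iff.mp hx with ⟨hp, hn⟩ | ⟨hn, hp⟩
  · exact hp
  · linarith

lemma exists_zero_Ioo {f : ℝ → ℝ} (hf : Continuous f) {a b : ℝ} (hab : a < b)
    (hmul : f a * f b < 0) : ∃ x ∈ Set.Ioo a b, f x = 0 := by
  rcases mul_neg_iff.mp hmul with ⟨ha, hb⟩ | ⟨ha, hb⟩
  · obtain ⟨x, hx, hfx⟩ := intermediate_value_Ioo' hab.le hf.continuousOn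
      (Set.mem_Ioo.mpr ⟨hb, ha⟩)
    exact ⟨x, hx, hfx⟩
  · obtain ⟨x, hx, hfx⟩ := intermediate_value_Ioo hab.le hf.continuousOn
      (Set.mem_Ioo.mpr ⟨ha, hb⟩)
    exact ⟨x, hx, hfx⟩



lemma heatPoly_zero_eq (t x : ℝ) : heatPoly 0 t x = 1 := by
  simp [heatPoly]

lemma heatPoly_one_eq (t x : ℝ) : heatPoly 1 t x = x := by
  simp [heatPoly, Nat.factorial]

def Good (t : ℝ) (m : ℕ) : Prop :=
  ∃ r : Fin (m+1) → ℝ, StrictMono r ∧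
    {x : ℝ | heatPoly (m+1) t x = 0} = Set.range r ∧
    ∀ i : Fin (m+1), 0 < (-1:ℝ)^(m - (i:ℕ)) * heatPoly m t (r i)

lemma good_zero (t : ℝ) : Good t 0 := by
  refine ⟨fun _ => 0, fun a b hab => absurd hab (by omega), ?_, ?_⟩
  · ext x
    simp [heatPoly_one_eq, eq_comm]
  · intro i
    simp [heatPoly_zero_eq]

lemma good_succ (t : ℝ) (ht : t < 0) (m : ℕ) (hG : Good t m) : Good t (m+1) := by
  obtain ⟨r, hr, hz, hsgn⟩ := hG
  set U : ℕ → ℝ → ℝ := fun n => heatPoly n t with hU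
  -- basic facts
  have hUr : ∀ i, U (m+1) (r i) = 0 := by
    intro i
    have : r i ∈ Set.range r := ⟨i, rfl⟩
    rw [← hz] at this
    exact this
  have hnz : ∀ x, x ∉ Set.range r → U (m+1) x ≠ 0 := by
    intro x hx
    rw [show (U (m+1) x ≠ 0) ↔ x ∉ {y : ℝ | heatPoly (m+1) t y = 0} from Iff.rfl, hz]
    exact hx
  have hder : ∀ x, HasDerivAt (U (m+1)) ((m+1) * U m x) x :=
    fun x => heatPoly_hasDerivAt m t x
  -- D1 : interval signs of U (m+1)
  have D1top : ∀ x, r (Fin.last m) < x → 0 < U (m+1) x := by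
    have hd : 0 < (m+1 : ℝ) * U m (r (Fin.last m)) := by
      have h1 := hsgn (Fin.last m)
      simp only [Fin.val_last, Nat.sub_self, pow_zero, one_mul] at h1
      exact mul_pos (by positivity) h1
    have hev := eventually_pos_right (hder (r (Fin.last m))) (hUr _) hd
    obtain ⟨x0, hx01, hx02⟩ := (hev.and self_mem_nhdsWithin).exists
    intro x hx
    refine sign_prop (heatPoly_continuous (m+1) t) Set.ordConnected_Ioi ?_ hx02 hx01 x hx
    intro y hy
    refine hnz y fun ⟨j, hj⟩ => ?_
    subst hj
    exact absurd (hr.monotone (Fin.le_last j)) (not_le.mpr hy)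
  have D1bot : ∀ x, x < r 0 → 0 < (-1:ℝ)^(m+1) * U (m+1) x := by
    set g : ℝ → ℝ := fun x => (-1:ℝ)^(m+1) * U (m+1) x with hg
    have hgder : HasDerivAt g ((-1:ℝ)^(m+1) * ((m+1) * U m (r 0))) (r 0) :=
      (hder (r 0)).const_mul _
    have hd : (-1:ℝ)^(m+1) * ((m+1) * U m (r 0)) < 0 := by
      have h1 := hsgn 0
      simp only [Fin.val_zero, Nat.sub_zero] at h1
      have : (-1:ℝ)^(m+1) = -(-1:ℝ)^m := by rw [pow_succ]; ring
      rw [this]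
      nlinarith [h1, (show (0:ℝ) < (m:ℝ)+1 by positivity)]
    have hg0 : g (r 0) = 0 := by rw [hg]; simp [hUr 0]
    have hev := eventually_pos_left hgder hg0 hd
    obtain ⟨x0, hx01, hx02⟩ := (hev.and self_mem_nhdsWithin).exists
    intro x hx
    refine sign_prop (continuous_const.mul (heatPoly_continuous (m+1) t))
      Set.ordConnected_Iio ?_ hx02 hx01 x hx
    intro y hy
    have : U (m+1) y ≠ 0 := by
      refine hnz y fun ⟨j, hj⟩ => ?_
      subst hj
      exact absurd (hr.monotone (Fin.zero_le j)) (not_le.mpr hy)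
    intro hc
    rcases mul_eq_zero.mp hc with hc | hc
    · exact absurd hc (pow_ne_zero _ (by norm_num))
    · exact this hc
  have D1mid : ∀ i : Fin m, ∀ x ∈ Set.Ioo (r i.castSucc) (r i.succ),
      0 < (-1:ℝ)^(m - (i:ℕ)) * U (m+1) x := by
    intro i
    set g : ℝ → ℝ := fun x => (-1:ℝ)^(m - (i:ℕ)) * U (m+1) x with hg
    have hgder : HasDerivAt g ((-1:ℝ)^(m-(i:ℕ)) * ((m+1) * U m (r i.castSucc))) (r i.castSucc) :=
      (hder _).const_mul _
    have hd : 0 < (-1:ℝ)^(m-(i:ℕ)) * ((m+1) * U m (r i.castSucc)) := by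
      have h1 := hsgn i.castSucc
      simp only [Fin.coe_castSucc] at h1
      nlinarith [h1, (show (0:ℝ) < (m:ℝ)+1 by positivity)]
    have hg0 : g (r i.castSucc) = 0 := by rw [hg]; simp [hUr]
    have hev := eventually_pos_right hgder hg0 hd
    have hlt : r i.castSucc < r i.succ := hr (Fin.castSucc_lt_succ : i.castSucc < i.succ)
    have hmem : Set.Ioo (r i.castSucc) (r i.succ) ∈ 𝓝[>] (r i.castSucc) :=
      Ioo_mem_nhdsGT_of_mem ⟨le_refl _, hlt⟩
    obtain ⟨x0, hx01, hx02⟩ := (hev.and hmem).exists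
    intro x hx
    refine sign_prop (continuous_const.mul (heatPoly_continuous (m+1) t))
      Set.ordConnected_Ioo ?_ hx02 hx01 x hx
    intro y hy
    have : U (m+1) y ≠ 0 := by
      refine hnz y fun ⟨j, hj⟩ => ?_
      subst hj
      have h1 : i.castSucc < j := hr.lt_iff_lt.mp hy.1
      have h2 : j < i.succ := hr.lt_iff_lt.mp hy.2
      rw [Fin.lt_iff_val_lt_val] at h1 h2
      simp only [Fin.coe_castSucc, Fin.val_succ] at h1 h2
      omega
    intro hc
    rcases mul_eq_zero.mp hc with hc | hc
    · exact absurd hc (pow_ne_zero _ (by norm_num))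
    · exact this hc
  -- values of U (m+2) at the r i
  have hV : ∀ i, U (m+2) (r i) = 2*(m+1)*t*U m (r i) := by
    intro i
    rw [hU]
    simp only
    rw [heatPoly_rec m t (r i), show heatPoly (m+1) t (r i) = 0 from hUr i]
    ring
  have hVs : ∀ i : Fin (m+1), 0 < (-1:ℝ)^(m+1-(i:ℕ)) * U (m+2) (r i) := by
    intro i
    have hi : (i:ℕ) ≤ m := Nat.lt_succ_iff.mp i.isLt
    have e : m+1-(i:ℕ) = (m-(i:ℕ))+1 := by omega
    have key : (-1:ℝ)^(m+1-(i:ℕ)) * U (m+2) (r i)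
        = 2*((m:ℝ)+1)*(-t)*((-1:ℝ)^(m-(i:ℕ)) * U m (r i)) := by
      rw [hV, e, pow_succ]
      ring
    rw [key]
    have h1 := hsgn i
    have h2 : (0:ℝ) < 2 * ((m:ℝ) + 1) * -t :=
      mul_pos (by positivity) (by linarith)
    exact mul_pos h2 h1
  -- existence of new roots
  have hUcont : Continuous (U (m+2)) := heatPoly_continuous (m+2) t
  have hAint : ∀ i : Fin m, ∃ c ∈ Set.Ioo (r i.castSucc) (r i.succ), U (m+2) c = 0 := by
    intro i
    have hi : (i:ℕ) < m := i.isLt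
    have h1 := hVs i.castSucc
    have h2 := hVs i.succ
    simp only [Fin.coe_castSucc, Fin.val_succ] at h1 h2
    rw [show m+1-((i:ℕ)+1) = m-(i:ℕ) from by omega] at h2
    have hodd : (-1:ℝ)^(m+1-(i:ℕ)) * (-1)^(m-(i:ℕ)) = -1 := by
      rw [← pow_add, show (m+1-(i:ℕ)) + (m-(i:ℕ)) = 2*(m-(i:ℕ))+1 from by omega]
      exact Odd.neg_one_pow ⟨m-(i:ℕ), by ring⟩
    have hmul : U (m+2) (r i.castSucc) * U (m+2) (r i.succ) < 0 := by
      have h3 := mul_pos h1 h2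
      have e : ((-1:ℝ)^(m+1-(i:ℕ)) * U (m+2) (r i.castSucc)) * ((-1)^(m-(i:ℕ)) * U (m+2) (r i.succ))
          = ((-1:ℝ)^(m+1-(i:ℕ)) * (-1)^(m-(i:ℕ))) * (U (m+2) (r i.castSucc) * U (m+2) (r i.succ)) := by
        ring
      rw [e, hodd] at h3
      linarith
    exact exists_zero_Ioo hUcont (hr (Fin.castSucc_lt_succ : i.castSucc < i.succ)) hmul
  have hAtop : ∃ c, r (Fin.last m) < c ∧ U (m+2) c = 0 := by
    have hlast := hVs (Fin.last m)
    simp only [Fin.val_last] at hlast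
    rw [show m+1-m = 1 from by omega, pow_one] at hlast
    have hVneg : U (m+2) (r (Fin.last m)) < 0 := by linarith
    have htt := heatPoly_tendsto_atTop (m+2) t (by omega)
    have h1 : ∀ᶠ x in Filter.atTop, 0 < heatPoly (m+2) t x := htt.eventually_gt_atTop 0
    obtain ⟨B, hB1, hB2⟩ := (h1.and (Filter.eventually_gt_atTop (r (Fin.last m)))).exists
    have hmul : U (m+2) (r (Fin.last m)) * U (m+2) B < 0 := mul_neg_of_neg_of_pos hVneg hB1
    obtain ⟨c, hc1, hc2⟩ := exists_zero_Ioo hUcont hB2 hmul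
    exact ⟨c, hc1.1, hc2⟩
  have hAbot : ∃ c, c < r 0 ∧ U (m+2) c = 0 := by
    have h0 := hVs 0
    simp only [Fin.val_zero, Nat.sub_zero] at h0
    have htt := heatPoly_tendsto_atTop (m+2) t (by omega)
    have h1 : ∀ᶠ x in Filter.atTop, 0 < heatPoly (m+2) t x := htt.eventually_gt_atTop 0
    obtain ⟨B, hB1, hB2⟩ := (h1.and (Filter.eventually_gt_atTop (-(r 0)))).exists
    have hBlt : -B < r 0 := by linarith
    have hUB : U (m+2) (-B) = (-1)^(m+2) * U (m+2) B := heatPoly_parity (m+2) t B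
    have hmul : U (m+2) (-B) * U (m+2) (r 0) < 0 := by
      have e : (-1:ℝ)^(m+2) = (-1)^m := by rw [pow_succ, pow_succ]; ring
      rw [hUB, e]
      have hneg : (-1:ℝ)^m * U (m+2) (r 0) < 0 := by
        have e2 : (-1:ℝ)^(m+1) = -(-1)^m := by rw [pow_succ]; ring
        rw [e2] at h0
        linarith
      nlinarith [mul_neg_of_pos_of_neg hB1 hneg]
    obtain ⟨c, hc1, hc2⟩ := exists_zero_Ioo hUcont hBlt hmul
    exact ⟨c, hc1.2, hc2⟩
  choose cmid hcmid1 hcmid2 using hAint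
  obtain ⟨ctop, hctop1, hctop2⟩ := hAtop
  obtain ⟨cbot, hcbot1, hcbot2⟩ := hAbot
  set snew : Fin (m+2) → ℝ := Fin.cons cbot (Fin.snoc cmid ctop) with hsnew
  have hs0 : snew 0 = cbot := by
    rw [hsnew]
    exact Fin.cons_zero _ _
  have hs_succ : ∀ i : Fin (m+1), snew i.succ = (Fin.snoc cmid ctop : Fin (m+1) → ℝ) i := by
    intro i
    rw [hsnew]
    exact Fin.cons_succ _ _ _
  have hs_cast : ∀ j : Fin m, snew (j.succ.castSucc) = cmid j := by
    intro j
    rw [← Fin.succ_castSucc, hs_succ, Fin.snoc_castSucc]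
  have hlow : ∀ i : Fin (m+1), snew i.castSucc < r i := by
    intro i
    induction i using Fin.cases with
    | zero => rw [show ((0 : Fin (m+1)).castSucc) = 0 from rfl, hs0]; exact hcbot1
    | succ j => rw [hs_cast j]; exact (hcmid1 j).2
  have hhigh : ∀ i : Fin (m+1), r i < snew i.succ := by
    intro i
    rw [hs_succ]
    induction i using Fin.lastCases with
    | last => rw [Fin.snoc_last]; exact hctop1
    | cast j => rw [Fin.snoc_castSucc]; exact (hcmid1 j).1
  have hsmono : StrictMono snew := by
    rw [Fin.strictMono_iff_lt_succ]
    intro i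
    exact (hlow i).trans (hhigh i)
  have hsroot : ∀ j : Fin (m+2), U (m+2) (snew j) = 0 := by
    intro j
    induction j using Fin.cases with
    | zero => rw [hs0]; exact hcbot2
    | succ i =>
      rw [hs_succ]
      induction i using Fin.lastCases with
      | last => rw [Fin.snoc_last]; exact hctop2
      | cast j => rw [Fin.snoc_castSucc]; exact hcmid2 j
  have hrange : Set.range snew ⊆ {x | U (m+2) x = 0} := by
    rintro x ⟨j, rfl⟩
    exact hsroot j
  have hrcard : (Set.range snew).ncard = m+2 := by
    rw [← Set.image_univ, Set.ncard_image_of_injective _ hsmono.injective, Set.ncard_univ]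
    simp
  have hzeq : {x : ℝ | heatPoly (m+2) t x = 0} = Set.range snew := by
    refine (Set.eq_of_subset_of_ncard_le hrange ?_ (heatPoly_zeros_finite (m+2) t)).symm
    rw [hrcard]
    exact heatPoly_zeros_ncard_le (m+2) t
  have hsgn' : ∀ j : Fin (m+2), 0 < (-1:ℝ)^(m+1-(j:ℕ)) * U (m+1) (snew j) := by
    intro j
    induction j using Fin.cases with
    | zero =>
      rw [hs0]
      simpa using D1bot cbot hcbot1
    | succ i =>
      rw [hs_succ]
      induction i using Fin.lastCases with
      | last =>
        rw [Fin.snoc_last]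
        have hD := D1top ctop hctop1
        simp only [Fin.val_succ, Fin.val_last]
        rw [show m+1-(m+1) = 0 from by omega, pow_zero, one_mul]
        exact hD
      | cast j =>
        rw [Fin.snoc_castSucc]
        have hD := D1mid j (cmid j) (hcmid1 j)
        simp only [Fin.val_succ, Fin.coe_castSucc]
        rw [show m+1-((j:ℕ)+1) = m-(j:ℕ) from by omega]
        exact hD
  exact ⟨snew, hsmono, hzeq, hsgn'⟩

theorem heatPoly_card_zeros (m : ℕ) (t : ℝ) (ht : t < 0) :
    {x : ℝ | heatPoly m t x = 0}.ncard = m := by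
  cases m with
  | zero =>
    have he : {x : ℝ | heatPoly 0 t x = 0} = ∅ := by
      ext x
      simp [heatPoly_zero_eq]
    rw [he]
    simp
  | succ n =>
    have hG : Good t n := Nat.rec (good_zero t) (fun k ih => good_succ t ht k ih) n
    obtain ⟨r, hr, hz, _⟩ := hG
    rw [hz, ← Set.image_univ, Set.ncard_image_of_injective _ hr.injective, Set.ncard_univ]
    simp
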